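/- Let t > 0, let r₀ ∈ ℝ³ with d = |r₀| > 0, and let B be the closed ball of radius R > 0 centered at the origin. Then ∫_B (4πt)^{−3/2}·exp(−|x − r₀|²/(4t)) dx = (1/2)·[erf((R−d)/(2√t)) + erf((R+d)/(2√t))] + (1/d)·√(t/π)·[exp(−(d+R)²/(4t)) − exp(−(d−R)²/(4t))]. -/

import Mathlib

open Real MeasureTheory intervalIntegral

open Set

/-- The error function `erf w = (2/√π) ∫₀ʷ exp(−u²) du`. -/
noncomputable def erf (w : ℝ) : ℝ := (2 / Real.sqrt π) * ∫ u in (0:ℝ)..w, Real.exp (-u^2)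

lemma integral_exp_neg_sq_eq_erf (a b : ℝ) :
    ∫ u in a..b, Real.exp (-u^2) = Real.sqrt π / 2 * (erf b - erf a) := by
  have hInt : ∀ x y : ℝ, IntervalIntegrable (fun u => Real.exp (-u^2)) volume x y :=
    fun x y => (Real.continuous_exp.comp (by continuity)).intervalIntegrable x y
  have h : (∫ u in (0:ℝ)..b, Real.exp (-u^2)) - ∫ u in (0:ℝ)..a, Real.exp (-u^2)
      = ∫ u in a..b, Real.exp (-u^2) :=
    intervalIntegral.integral_interval_sub_left (hInt 0 b) (hInt 0 a)
  have hπ : Real.sqrt π ≠ 0 := by positivity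
  rw [erf, erf, ← h]
  field_simp

lemma erf_neg (w : ℝ) : erf (-w) = - erf w := by
  have h : ∫ u in (0:ℝ)..(-w), Real.exp (-u^2) = - ∫ u in (0:ℝ)..w, Real.exp (-u^2) := by
    have := intervalIntegral.integral_comp_neg (a := 0) (b := w) (fun u => Real.exp (-u^2))
    simp only [neg_sq, neg_zero] at this
    rw [this, intervalIntegral.integral_symm]
  rw [erf, erf, h, mul_neg]

lemma integral_r_exp (t ρ : ℝ) (ht : 0 < t) :
    ∫ r in (0:ℝ)..ρ, r * Real.exp (-r^2/(4*t)) = 2*t*(1 - Real.exp (-ρ^2/(4*t))) := by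
  have key : ∀ x : ℝ, HasDerivAt (fun r => -(2*t) * Real.exp (-r^2/(4*t)))
      (x * Real.exp (-x^2/(4*t))) x := by
    intro x
    have h1 : HasDerivAt (fun r : ℝ => -r^2/(4*t)) (-(2*x)/(4*t)) x := by
      have := ((hasDerivAt_pow 2 x).neg).div_const (4*t)
      simpa using this
    have h2 := (Real.hasDerivAt_exp _).comp x h1
    have h3 := h2.const_mul (-(2*t))
    convert! h3 using 1
    field_simp
    ring
  have := intervalIntegral.integral_eq_sub_of_hasDerivAt (f := fun r => -(2*t) * Real.exp (-r^2/(4*t)))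
    (fun x _ => key x)
    ((continuous_id.mul (Real.continuous_exp.comp (by continuity))).intervalIntegrable 0 ρ)
  rw [this]
  simp
  ring

lemma volume_ball_E2 : (volume (Metric.ball (0 : EuclideanSpace ℝ (Fin 2)) 1)).toReal = π := by
  rw [EuclideanSpace.volume_ball]
  norm_num [Real.Gamma_two]
  exact Real.sq_sqrt Real.pi_pos.le

lemma disk_integral (t s : ℝ) (ht : 0 < t) (hs : 0 ≤ s) :
    ∫ y : EuclideanSpace ℝ (Fin 2), (if ‖y‖^2 ≤ s then Real.exp (-‖y‖^2/(4*t)) else 0)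
      = 4*π*t*(1 - Real.exp (-s/(4*t))) := by
  have h := MeasureTheory.integral_fun_norm_addHaar (volume : Measure (EuclideanSpace ℝ (Fin 2)))
      (fun r => if r^2 ≤ s then Real.exp (-r^2/(4*t)) else 0)
  rw [h, finrank_euclideanSpace_fin, measureReal_def, volume_ball_E2]
  have hρ : Real.sqrt s ^ 2 = s := Real.sq_sqrt hs
  have hset : ∀ y ∈ Ioi (0:ℝ), y ^ (2-1) • (if y^2 ≤ s then Real.exp (-y^2/(4*t)) else 0)
      = (Ioc (0:ℝ) (Real.sqrt s)).indicator (fun y => y * Real.exp (-y^2/(4*t))) y := by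
    intro y hy
    have hy0 : 0 < y := hy
    by_cases hc : y^2 ≤ s
    · have : y ≤ Real.sqrt s := by
        nlinarith [Real.sq_sqrt hs, Real.sqrt_nonneg s]
      simp [indicator, hc, hy0, this, smul_eq_mul]
    · have : ¬ y ≤ Real.sqrt s := by
        intro hle
        exact hc (by nlinarith [Real.sqrt_nonneg s])
      simp [indicator, hc, hy0, this]
  rw [setIntegral_congr_fun measurableSet_Ioi hset,
    setIntegral_indicator measurableSet_Ioc]
  have : Ioi (0:ℝ) ∩ Ioc 0 (Real.sqrt s) = Ioc 0 (Real.sqrt s) := by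
    simp [inter_eq_right.2 Ioc_subset_Ioi_self]
  rw [this, ← intervalIntegral.integral_of_le (Real.sqrt_nonneg s), integral_r_exp t _ ht, hρ]
  simp only [smul_eq_mul]
  ring

lemma euclidean_norm_sq' {n : ℕ} (x : EuclideanSpace ℝ (Fin n)) : ‖x‖^2 = ∑ i, x i ^ 2 := by
  rw [EuclideanSpace.norm_eq, Real.sq_sqrt (by positivity)]
  simp [sq_abs]


lemma disk_integral_pi (t s : ℝ) (ht : 0 < t) :
    ∫ w : Fin 2 → ℝ, (if (∑ i, w i ^ 2) ≤ s then Real.exp (-(∑ i, w i ^ 2)/(4*t)) else 0)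
      = if 0 ≤ s then 4*π*t*(1 - Real.exp (-s/(4*t))) else 0 := by
  by_cases hs : 0 ≤ s
  · rw [if_pos hs]
    have mp := EuclideanSpace.volume_preserving_symm_measurableEquiv_toLp (Fin 2)
    rw [← mp.integral_comp (MeasurableEquiv.measurableEmbedding _)]
    have hco : ∀ (x : EuclideanSpace ℝ (Fin 2)) (i : Fin 2),
        (MeasurableEquiv.toLp 2 (Fin 2 → ℝ)).symm x i = x i := fun x i => rfl
    have heq : ∀ x : EuclideanSpace ℝ (Fin 2),
        (if (∑ i, ((MeasurableEquiv.toLp 2 (Fin 2 → ℝ)).symm x) i ^ 2) ≤ s then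
          Real.exp (-(∑ i, ((MeasurableEquiv.toLp 2 (Fin 2 → ℝ)).symm x) i ^ 2)/(4*t)) else 0)
        = (if ‖x‖^2 ≤ s then Real.exp (-‖x‖^2/(4*t)) else 0) := by
      intro x
      simp only [hco, ← euclidean_norm_sq']
    rw [show (fun x : EuclideanSpace ℝ (Fin 2) =>
        (if (∑ i, ((MeasurableEquiv.toLp 2 (Fin 2 → ℝ)).symm x) i ^ 2) ≤ s then
          Real.exp (-(∑ i, ((MeasurableEquiv.toLp 2 (Fin 2 → ℝ)).symm x) i ^ 2)/(4*t)) else 0))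
        = fun x => (if ‖x‖^2 ≤ s then Real.exp (-‖x‖^2/(4*t)) else 0) from funext heq]
    exact disk_integral t s ht hs
  · rw [if_neg hs]
    have : ∀ w : Fin 2 → ℝ, (if (∑ i, w i ^ 2) ≤ s then Real.exp (-(∑ i, w i ^ 2)/(4*t)) else 0) = 0 := by
      intro w
      rw [if_neg]
      intro h
      have : (0:ℝ) ≤ ∑ i, w i ^ 2 := by positivity
      linarith [not_le.mp hs]
    simp only [this, MeasureTheory.integral_zero]

lemma final_1d (t d R : ℝ) (ht : 0 < t) (hd0 : 0 < d) (hR : 0 < R) :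
    (4*π*t)^(-(3:ℝ)/2) * (4*π*t) *
      ∫ z in (-R)..R, Real.exp (-(z-d)^2/(4*t)) * (1 - Real.exp (-(R^2-z^2)/(4*t)))
    = (1/2) * (erf ((R - d) / (2 * Real.sqrt t)) + erf ((R + d) / (2 * Real.sqrt t)))
      + (1 / d) * Real.sqrt (t / π) *
        (Real.exp (-(d + R)^2 / (4 * t)) - Real.exp (-(d - R)^2 / (4 * t))) := by
  have ht0 := ht.le
  have hst : (0:ℝ) < Real.sqrt t := Real.sqrt_pos.2 ht
  have hsπ : (0:ℝ) < Real.sqrt π := Real.sqrt_pos.2 Real.pi_pos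
  have hstst : Real.sqrt t * Real.sqrt t = t := Real.mul_self_sqrt ht0
  -- the constant
  have hC : (4*π*t)^(-(3:ℝ)/2) * (4*π*t) = 1/(2 * Real.sqrt π * Real.sqrt t) := by
    have h4 : (0:ℝ) < 4*π*t := by positivity
    have : (4*π*t)^(-(3:ℝ)/2) * (4*π*t) = (4*π*t)^(-(1:ℝ)/2) := by
      nth_rewrite 2 [show (4*π*t) = (4*π*t)^(1:ℝ) by rw [Real.rpow_one]]
      rw [← Real.rpow_add h4]
      norm_num
    rw [this, show -(1:ℝ)/2 = -(1/2) by norm_num, Real.rpow_neg h4.le,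
      ← Real.sqrt_eq_rpow,
      show (4*π*t) = (2 * Real.sqrt π * Real.sqrt t)^2 by
        rw [mul_pow, mul_pow, Real.sq_sqrt Real.pi_pos.le, Real.sq_sqrt ht0]; ring,
      Real.sqrt_sq (by positivity), one_div]
  have hpt : ∀ z : ℝ, Real.exp (-(z-d)^2/(4*t)) * (1 - Real.exp (-(R^2-z^2)/(4*t)))
      = Real.exp (-((z-d)/(2*Real.sqrt t))^2)
        - Real.exp (-(R^2+d^2)/(4*t)) * Real.exp (d/(2*t)*z) := by
    intro z
    have h1 : -((z-d)/(2*Real.sqrt t))^2 = -(z-d)^2/(4*t) := by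
      rw [div_pow, mul_pow, Real.sq_sqrt ht0]; ring
    have h2 : Real.exp (-(z-d)^2/(4*t)) * Real.exp (-(R^2-z^2)/(4*t))
        = Real.exp (-(R^2+d^2)/(4*t)) * Real.exp (d/(2*t)*z) := by
      rw [← Real.exp_add, ← Real.exp_add]; congr 1; field_simp; ring
    rw [h1, mul_sub, mul_one, h2]
  rw [intervalIntegral.integral_congr (g := fun z => Real.exp (-((z-d)/(2*Real.sqrt t))^2)
        - Real.exp (-(R^2+d^2)/(4*t)) * Real.exp (d/(2*t)*z)) (fun z _ => hpt z)]
  have hi1 : IntervalIntegrable (fun z => Real.exp (-((z-d)/(2*Real.sqrt t))^2)) volume (-R) R :=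
    (Real.continuous_exp.comp (by continuity)).intervalIntegrable _ _
  have hi2 : IntervalIntegrable
      (fun z => Real.exp (-(R^2+d^2)/(4*t)) * Real.exp (d/(2*t)*z)) volume (-R) R :=
    (continuous_const.mul (Real.continuous_exp.comp (by continuity))).intervalIntegrable _ _
  rw [intervalIntegral.integral_sub hi1 hi2]
  have e1 : ∫ z in (-R)..R, Real.exp (-((z-d)/(2*Real.sqrt t))^2)
      = (2*Real.sqrt t) * (Real.sqrt π / 2 *
          (erf ((R-d)/(2*Real.sqrt t)) + erf ((R+d)/(2*Real.sqrt t)))) := by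
    have s1 : ∫ z in (-R)..R, Real.exp (-((z-d)/(2*Real.sqrt t))^2)
        = ∫ x in (-R-d)..(R-d), Real.exp (-(x/(2*Real.sqrt t))^2) :=
      intervalIntegral.integral_comp_sub_right (fun x => Real.exp (-(x/(2*Real.sqrt t))^2)) d
    have s2 : ∫ x in (-R-d)..(R-d), Real.exp (-(x/(2*Real.sqrt t))^2)
        = (2*Real.sqrt t) • ∫ u in ((-R-d)/(2*Real.sqrt t))..((R-d)/(2*Real.sqrt t)),
            Real.exp (-u^2) :=
      intervalIntegral.integral_comp_div (fun u => Real.exp (-u^2)) (by positivity)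
    rw [s1, s2, integral_exp_neg_sq_eq_erf, smul_eq_mul,
      show (-R - d) / (2*Real.sqrt t) = -((R + d) / (2*Real.sqrt t)) by ring, erf_neg]
    ring
  have hEa : Real.exp (-(R^2+d^2)/(4*t)) * Real.exp (d/(2*t)*R) = Real.exp (-(d-R)^2/(4*t)) := by
    rw [← Real.exp_add]; congr 1; field_simp; ring
  have hEb : Real.exp (-(R^2+d^2)/(4*t)) * Real.exp (d/(2*t)*(-R))
      = Real.exp (-(d+R)^2/(4*t)) := by
    rw [← Real.exp_add]; congr 1; field_simp; ring
  have e2 : ∫ z in (-R)..R, Real.exp (-(R^2+d^2)/(4*t)) * Real.exp (d/(2*t)*z)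
      = (2*(Real.sqrt t*Real.sqrt t)/d) *
          (Real.exp (-(d-R)^2/(4*t)) - Real.exp (-(d+R)^2/(4*t))) := by
    have s1 : ∫ z in (-R)..R, Real.exp (d/(2*t)*z)
        = (d/(2*t))⁻¹ • ∫ x in (d/(2*t)*(-R))..(d/(2*t)*R), Real.exp x :=
      intervalIntegral.integral_comp_mul_left Real.exp (by positivity)
    rw [intervalIntegral.integral_const_mul, s1, integral_exp, smul_eq_mul,
      show (d/(2*t))⁻¹ = 2*t/d by field_simp]
    linear_combination (2*t/d)*hEa - (2*t/d)*hEb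
      - (2/d)*(Real.exp (-(d-R)^2/(4*t)) - Real.exp (-(d+R)^2/(4*t)))*hstst
  have hsq : Real.sqrt (t/π) = Real.sqrt t / Real.sqrt π := by
    rw [Real.sqrt_div ht0]
  rw [e1, e2, hC, hsq]
  field_simp
  rw [show (t:ℝ) = Real.sqrt t * Real.sqrt t from hstst.symm]
  ring_nf

lemma rotate_integral (R : ℝ) (f : ℝ → ℝ) (r₀ : EuclideanSpace ℝ (Fin 3)) (d : ℝ)
    (hd : d = ‖r₀‖) (hd0 : 0 < d) :
    ∫ x in Metric.closedBall (0 : EuclideanSpace ℝ (Fin 3)) R, f ‖x - r₀‖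
      = ∫ x in Metric.closedBall (0 : EuclideanSpace ℝ (Fin 3)) R,
          f ‖x - (d • EuclideanSpace.single (0 : Fin 3) (1:ℝ))‖ := by
  set u : EuclideanSpace ℝ (Fin 3) := d⁻¹ • r₀ with hu_def
  have hu : ‖u‖ = 1 := by
    rw [hu_def, norm_smul, Real.norm_eq_abs, abs_of_pos (inv_pos.2 hd0), ← hd,
      inv_mul_cancel₀ hd0.ne']
  have horth : Orthonormal ℝ (Set.restrict {(0 : Fin 3)} (fun _ => u)) := by
    constructor
    · intro i; exact hu
    · intro i j hij
      exact absurd (Subtype.ext (by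
        have hi := i.2; have hj := j.2
        simp only [Set.mem_singleton_iff] at hi hj
        rw [hi, hj])) hij
  obtain ⟨b, hb⟩ := horth.exists_orthonormalBasis_extension_of_card_eq
    (by simp [finrank_euclideanSpace_fin])
  have hb0 : b 0 = u := hb 0 rfl
  have hrepr : b.repr r₀ = d • EuclideanSpace.single (0 : Fin 3) (1:ℝ) := by
    have hr : r₀ = d • b 0 := by
      rw [hb0, hu_def, smul_smul, mul_inv_cancel₀ hd0.ne', one_smul]
    rw [hr, _root_.map_smul, OrthonormalBasis.repr_self]
  have mp := b.measurePreserving_repr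
  have emb : MeasurableEmbedding b.repr := b.repr.toHomeomorph.measurableEmbedding
  have hpre : (⇑b.repr) ⁻¹' (Metric.closedBall 0 R) = Metric.closedBall 0 R := by
    ext x
    simp [Metric.mem_closedBall, dist_zero_right]
  calc ∫ x in Metric.closedBall (0 : EuclideanSpace ℝ (Fin 3)) R, f ‖x - r₀‖
      = ∫ x in (⇑b.repr) ⁻¹' (Metric.closedBall 0 R),
          (fun y => f ‖y - b.repr r₀‖) (b.repr x) := by
        rw [hpre]
        refine setIntegral_congr_fun measurableSet_closedBall (fun x _ => ?_)
        simp only [← map_sub, LinearIsometryEquiv.norm_map]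
    _ = ∫ y in Metric.closedBall 0 R, f ‖y - b.repr r₀‖ := by
        exact mp.setIntegral_preimage_emb emb (fun y => f ‖y - b.repr r₀‖) (Metric.closedBall 0 R)
    _ = _ := by rw [hrepr]

lemma main_reduced (t d R : ℝ) (ht : 0 < t) (hd0 : 0 < d) (hR : 0 < R) :
    ∫ x in Metric.closedBall (0 : EuclideanSpace ℝ (Fin 3)) R,
        (4*π*t)^(-(3:ℝ)/2) *
          Real.exp (-‖x - (d • EuclideanSpace.single (0 : Fin 3) (1:ℝ))‖^2/(4*t))
    = (1/2) * (erf ((R - d) / (2 * Real.sqrt t)) + erf ((R + d) / (2 * Real.sqrt t)))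
      + (1 / d) * Real.sqrt (t / π) *
        (Real.exp (-(d + R)^2 / (4 * t)) - Real.exp (-(d - R)^2 / (4 * t))) := by
  set v : EuclideanSpace ℝ (Fin 3) := d • EuclideanSpace.single (0 : Fin 3) (1:ℝ) with hv
  set c : ℝ := (4*π*t)^(-(3:ℝ)/2) with hc
  set g : EuclideanSpace ℝ (Fin 3) → ℝ := fun x => c * Real.exp (-‖x - v‖^2/(4*t)) with hg
  set χ : (ℝ × (Fin 2 → ℝ)) ≃ᵐ EuclideanSpace ℝ (Fin 3) :=
    (MeasurableEquiv.piFinSuccAbove (fun _ : Fin 3 => ℝ) 0).symm.trans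
      (MeasurableEquiv.toLp 2 (Fin 3 → ℝ)) with hχdef
  have mp3 : MeasurePreserving χ volume volume :=
    ((EuclideanSpace.volume_preserving_symm_measurableEquiv_toLp (Fin 3)).symm).comp
      ((MeasureTheory.volume_preserving_piFinSuccAbove (fun _ : Fin 3 => ℝ) 0).symm)
  have hχ0 : ∀ p : ℝ × (Fin 2 → ℝ), (χ p) (0 : Fin 3) = p.1 := fun p => rfl
  have hχs : ∀ (p : ℝ × (Fin 2 → ℝ)) (i : Fin 2), (χ p) i.succ = p.2 i := fun p i => rfl
  -- coordinates of v
  have hv0 : v (0 : Fin 3) = d := by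
    rw [hv]; simp [EuclideanSpace.single_apply]
  have hvs : ∀ i : Fin 2, v i.succ = 0 := by
    intro i; rw [hv]; simp [EuclideanSpace.single_apply, (Fin.succ_ne_zero i)]
  set F : ℝ × (Fin 2 → ℝ) → ℝ := fun p =>
    if p.1^2 + ∑ i, p.2 i ^ 2 ≤ R^2 then
      c * Real.exp (-((p.1 - d)^2 + ∑ i, p.2 i ^ 2)/(4*t)) else 0 with hF
  have hcomp : ∀ p, (Metric.closedBall (0 : EuclideanSpace ℝ (Fin 3)) R).indicator g (χ p)
      = F p := by
    intro p
    have hn1 : ‖χ p‖^2 = p.1^2 + ∑ i, p.2 i ^ 2 := by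
      rw [euclidean_norm_sq', Fin.sum_univ_succ]; rfl
    have hn2 : ‖χ p - v‖^2 = (p.1 - d)^2 + ∑ i, p.2 i ^ 2 := by
      rw [euclidean_norm_sq', Fin.sum_univ_succ]
      have e0 : (χ p - v) (0 : Fin 3) = p.1 - d := by
        have h' : (χ p - v) (0 : Fin 3) = χ p 0 - v 0 := rfl
        rw [h', hχ0, hv0]
      have es : ∀ i : Fin 2, (χ p - v) i.succ = p.2 i := by
        intro i
        have h' : (χ p - v) i.succ = χ p i.succ - v i.succ := rfl
        rw [h', hχs, hvs, sub_zero]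
      rw [e0]
      congr 1
      exact Finset.sum_congr rfl fun i _ => by rw [es]
    have hmem : χ p ∈ Metric.closedBall (0 : EuclideanSpace ℝ (Fin 3)) R
        ↔ p.1^2 + ∑ i, p.2 i ^ 2 ≤ R^2 := by
      rw [Metric.mem_closedBall, dist_zero_right, ← hn1]
      constructor
      · intro h; nlinarith [norm_nonneg (χ p)]
      · intro h; nlinarith [norm_nonneg (χ p), hR.le]
    by_cases hmem' : χ p ∈ Metric.closedBall (0 : EuclideanSpace ℝ (Fin 3)) R
    · rw [Set.indicator_of_mem hmem']
      simp only [hF, hg]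
      rw [if_pos (hmem.1 hmem'), hn2]
    · rw [Set.indicator_of_notMem hmem']
      simp only [hF]
      rw [if_neg (fun h => hmem' (hmem.2 h))]
  have hgcont : Continuous g := by
    apply continuous_const.mul
    exact Real.continuous_exp.comp
      ((((continuous_norm.comp (continuous_id.sub continuous_const)).pow 2).neg).div_const _)
  have hGint : Integrable ((Metric.closedBall (0 : EuclideanSpace ℝ (Fin 3)) R).indicator g) :=
    (hgcont.continuousOn.integrableOn_compact (isCompact_closedBall _ _)).integrable_indicator
      measurableSet_closedBall
  have hFint : Integrable F := by
    rw [show F = ((Metric.closedBall (0 : EuclideanSpace ℝ (Fin 3)) R).indicator g) ∘ χ from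
      funext fun p => (hcomp p).symm]
    exact (mp3.integrable_comp_emb χ.measurableEmbedding).2 hGint
  calc ∫ x in Metric.closedBall (0 : EuclideanSpace ℝ (Fin 3)) R, c * Real.exp (-‖x - v‖^2/(4*t))
      = ∫ x, (Metric.closedBall (0 : EuclideanSpace ℝ (Fin 3)) R).indicator g x :=
        (MeasureTheory.integral_indicator measurableSet_closedBall).symm
    _ = ∫ p : ℝ × (Fin 2 → ℝ),
          (Metric.closedBall (0 : EuclideanSpace ℝ (Fin 3)) R).indicator g (χ p) :=
        (mp3.integral_comp χ.measurableEmbedding _).symm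
    _ = ∫ p : ℝ × (Fin 2 → ℝ), F p := by
        exact integral_congr_ae (Filter.Eventually.of_forall hcomp)
    _ = ∫ z : ℝ, ∫ w : Fin 2 → ℝ, F (z, w) := by
        rw [← integral_prod F (by rwa [← Measure.volume_eq_prod])]
        rw [Measure.volume_eq_prod]
    _ = (1/2) * (erf ((R - d) / (2 * Real.sqrt t)) + erf ((R + d) / (2 * Real.sqrt t)))
      + (1 / d) * Real.sqrt (t / π) *
        (Real.exp (-(d + R)^2 / (4 * t)) - Real.exp (-(d - R)^2 / (4 * t))) := by
        have inner_eq : ∀ z : ℝ, (∫ w : Fin 2 → ℝ, F (z, w))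
            = (c * Real.exp (-(z-d)^2/(4*t))) *
              (if 0 ≤ R^2 - z^2 then 4*π*t*(1 - Real.exp (-(R^2-z^2)/(4*t))) else 0) := by
          intro z
          have hsplit : ∀ w : Fin 2 → ℝ, F (z, w)
              = (c * Real.exp (-(z-d)^2/(4*t))) *
                (if (∑ i, w i ^ 2) ≤ R^2 - z^2 then
                  Real.exp (-(∑ i, w i ^ 2)/(4*t)) else 0) := by
            intro w
            simp only [hF]
            by_cases hcnd : (∑ i, w i ^ 2) ≤ R^2 - z^2
            · rw [if_pos (by linarith), if_pos hcnd,
                show -((z - d)^2 + ∑ i, w i ^ 2)/(4*t)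
                  = (-(z-d)^2/(4*t)) + (-(∑ i, w i ^ 2)/(4*t)) by ring,
                Real.exp_add, mul_assoc]
            · rw [if_neg (by intro h; exact hcnd (by linarith)), if_neg hcnd, mul_zero]
          simp only [hsplit]
          rw [MeasureTheory.integral_const_mul, disk_integral_pi t (R^2 - z^2) ht]
        simp only [inner_eq]
        have router : ∀ z : ℝ, (c * Real.exp (-(z-d)^2/(4*t))) *
              (if 0 ≤ R^2 - z^2 then 4*π*t*(1 - Real.exp (-(R^2-z^2)/(4*t))) else 0)
            = (Set.Icc (-R) R).indicator (fun z => (c*(4*π*t)) *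
                (Real.exp (-(z-d)^2/(4*t)) * (1 - Real.exp (-(R^2-z^2)/(4*t))))) z := by
          intro z
          by_cases hz : 0 ≤ R^2 - z^2
          · rw [if_pos hz, Set.indicator_of_mem]
            · ring
            · rw [Set.mem_Icc]
              constructor
              · nlinarith [sq_nonneg (z + R)]
              · nlinarith [sq_nonneg (z - R)]
          · rw [if_neg hz, mul_zero, Set.indicator_of_notMem]
            intro hmem
            rw [Set.mem_Icc] at hmem
            apply hz
            nlinarith
        simp only [router]
        rw [MeasureTheory.integral_indicator measurableSet_Icc,
          MeasureTheory.integral_Icc_eq_integral_Ioc,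
          ← intervalIntegral.integral_of_le (by linarith : (-R) ≤ R),
          intervalIntegral.integral_const_mul, hc]
        exact final_1d t d R ht hd0 hR

theorem heatKernel_integral_ball (t : ℝ) (ht : 0 < t) (r₀ : EuclideanSpace ℝ (Fin 3))
    (d : ℝ) (hd : d = ‖r₀‖) (hd0 : 0 < d) (R : ℝ) (hR : 0 < R) :
    (∫ x in Metric.closedBall (0 : EuclideanSpace ℝ (Fin 3)) R,
        (4 * π * t) ^ (-(3:ℝ)/2) * Real.exp (-‖x - r₀‖^2 / (4 * t))) =
    (1/2) * (erf ((R - d) / (2 * Real.sqrt t)) + erf ((R + d) / (2 * Real.sqrt t)))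
      + (1 / d) * Real.sqrt (t / π) *
        (Real.exp (-(d + R)^2 / (4 * t)) - Real.exp (-(d - R)^2 / (4 * t))) := by
  have h1 := rotate_integral R
    (fun r => (4 * π * t) ^ (-(3:ℝ)/2) * Real.exp (-r^2 / (4 * t))) r₀ d hd hd0
  have h2 := main_reduced t d R ht hd0 hR
  calc (∫ x in Metric.closedBall (0 : EuclideanSpace ℝ (Fin 3)) R,
        (4 * π * t) ^ (-(3:ℝ)/2) * Real.exp (-‖x - r₀‖^2 / (4 * t)))
      = ∫ x in Metric.closedBall (0 : EuclideanSpace ℝ (Fin 3)) R,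
          (4 * π * t) ^ (-(3:ℝ)/2) *
            Real.exp (-‖x - (d • EuclideanSpace.single (0 : Fin 3) (1:ℝ))‖^2/(4*t)) := by
        exact h1
    _ = _ := h2
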